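/- For 1 ≤ p < p* < ∞, the n-th Bernstein number of the natural inclusion ℓ_p → ℓ_{p*} equals n^{(p - p*)/(p p*)} = n^{1/p* - 1/p}. -/

import Mathlib

open Filter Set

set_option synthInstance.maxHeartbeats 1000000
set_option maxHeartbeats 2000000

lemma finite_coord (p : ENNReal) (hp0 : 0 < p.toReal) (x : lp (fun _ : ℕ => ℝ) p) {c : ℝ}
    (hc : 0 < c) : {j : ℕ | c ≤ |(x : ∀ _ : ℕ, ℝ) j|}.Finite := by
  have hs : Summable (fun j => ‖(x : ∀ _ : ℕ, ℝ) j‖ ^ p.toReal) := (lp.memℓp x).summable hp0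
  have h2 : ∀ᶠ j in Filter.cofinite, ‖(x : ∀ _ : ℕ, ℝ) j‖ ^ p.toReal < c ^ p.toReal :=
    hs.tendsto_cofinite_zero.eventually_lt_const (Real.rpow_pos_of_pos hc _)
  refine (Filter.eventually_cofinite.mp h2).subset ?_
  intro j hj
  simp only [Set.mem_setOf_eq, not_lt, Real.norm_eq_abs] at *
  exact Real.rpow_le_rpow hc.le hj hp0.le

/-- The coordinate linear map from `lp` to the product. -/
noncomputable def coordMap (p : ENNReal) : lp (fun _ : ℕ => ℝ) p →ₗ[ℝ] (ℕ → ℝ) where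
  toFun x := (x : ∀ _ : ℕ, ℝ)
  map_add' f g := lp.coeFn_add f g
  map_smul' c f := lp.coeFn_smul c f

lemma isCompact_cube (p : ENNReal) [Fact (1 ≤ p)] (V : Submodule ℝ (lp (fun _ : ℕ => ℝ) p))
    [FiniteDimensional ℝ V] :
    IsCompact {x : lp (fun _ : ℕ => ℝ) p | x ∈ V ∧ ∀ j, |(x : ∀ _ : ℕ, ℝ) j| ≤ 1} := by
  classical
  set Φ : V →ₗ[ℝ] (ℕ → ℝ) := (coordMap p).comp V.subtype with hΦ
  have hΦinj : Function.Injective Φ := by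
    intro a b hab
    apply Subtype.ext
    exact lp.ext (by exact hab)
  let R : Submodule ℝ (ℕ → ℝ) := LinearMap.range Φ
  haveI : FiniteDimensional ℝ R := by
    exact Module.Finite.range Φ
  let e : V ≃ₗ[ℝ] R := LinearEquiv.ofInjective Φ hΦinj
  let Ψ : R →ₗ[ℝ] lp (fun _ : ℕ => ℝ) p := V.subtype.comp (e.symm : R →ₗ[ℝ] V)
  have hΨc : Continuous Ψ := Ψ.continuous_of_finiteDimensional
  let C : Set R := {g | ∀ j, |(g : ℕ → ℝ) j| ≤ 1}
  have hCc : IsCompact C := by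
    rw [Topology.IsEmbedding.subtypeVal.isCompact_iff]
    have : (Subtype.val '' C : Set (ℕ → ℝ)) = ↑R ∩ Set.pi Set.univ (fun _ : ℕ => Set.Icc (-1:ℝ) 1) := by
      ext f
      constructor
      · rintro ⟨g, hg, rfl⟩
        exact ⟨g.2, fun j _ => abs_le.mp (hg j)⟩
      · rintro ⟨hf, hf2⟩
        exact ⟨⟨f, hf⟩, fun j => abs_le.mpr (hf2 j (Set.mem_univ j)), rfl⟩
    rw [this]
    exact (isCompact_univ_pi (fun _ => isCompact_Icc)).inter_left R.closed_of_finiteDimensional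
  have himg : Ψ '' C = {x : lp (fun _ : ℕ => ℝ) p | x ∈ V ∧ ∀ j, |(x : ∀ _ : ℕ, ℝ) j| ≤ 1} := by
    ext x
    constructor
    · rintro ⟨g, hg, rfl⟩
      have hcoord : ((Ψ g : lp (fun _ : ℕ => ℝ) p) : ∀ _ : ℕ, ℝ) = (g : ℕ → ℝ) := by
        have h1 : Φ (e.symm g) = (g : ℕ → ℝ) := by
          have := e.apply_symm_apply g
          conv_rhs => rw [← this]
          rfl
        exact h1
      exact ⟨(e.symm g).2, by rw [hcoord]; exact hg⟩
    · rintro ⟨hxV, hx⟩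
      refine ⟨e ⟨x, hxV⟩, ?_, ?_⟩
      · intro j
        have h2 : ((e ⟨x, hxV⟩ : R) : ℕ → ℝ) = Φ ⟨x, hxV⟩ := rfl
        show |((e ⟨x, hxV⟩ : R) : ℕ → ℝ) j| ≤ 1
        rw [h2]
        exact hx j
      · show V.subtype (e.symm (e ⟨x, hxV⟩)) = x
        rw [e.symm_apply_apply]
        rfl
  rw [← himg]
  exact hCc.image hΨc

lemma exists_unit_flat (p : ENNReal) [Fact (1 ≤ p)] (hpt : 0 < p.toReal) {n : ℕ} (hn : 1 ≤ n)
    (V : Submodule ℝ (lp (fun _ : ℕ => ℝ) p)) (hV : Module.finrank ℝ V = n) :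
    ∃ x : lp (fun _ : ℕ => ℝ) p, x ∈ V ∧ ‖x‖ = 1 ∧
      ∀ j, |(x : ∀ _ : ℕ, ℝ) j| ≤ (n : ℝ) ^ (-(1 / p.toReal)) := by
  classical
  haveI : FiniteDimensional ℝ V := FiniteDimensional.of_finrank_pos (by omega : 0 < Module.finrank ℝ V)
  set K : Set (lp (fun _ : ℕ => ℝ) p) :=
    {x | x ∈ V ∧ ∀ j, |(x : ∀ _ : ℕ, ℝ) j| ≤ 1} with hK
  have hKcomp : IsCompact K := isCompact_cube p V
  have hKne : K.Nonempty := ⟨0, V.zero_mem, by intro j; rw [lp.coeFn_zero]; simp⟩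
  obtain ⟨x, hxex⟩ := hKcomp.extremePoints_nonempty hKne
  rw [mem_extremePoints] at hxex
  obtain ⟨⟨hxV, hxc⟩, hext⟩ := hxex
  set A : Set ℕ := {j | |(x : ∀ _ : ℕ, ℝ) j| = 1} with hA
  have hAfin : A.Finite := by
    refine (finite_coord p hpt x one_pos).subset ?_
    intro j hj
    exact le_of_eq hj.symm
  -- key: any element of V vanishing on A is zero
  have hkey : ∀ h : lp (fun _ : ℕ => ℝ) p, h ∈ V → (∀ j ∈ A, (h : ∀ _ : ℕ, ℝ) j = 0) → h = 0 := by
    intro h hhV hhA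
    by_contra hh0
    have hhn : 0 < ‖h‖ := by
      rw [norm_pos_iff]; exact hh0
    -- find a gap δ
    obtain ⟨δ, hδ0, hδ⟩ : ∃ δ : ℝ, 0 < δ ∧ ∀ j, j ∉ A → |(x : ∀ _ : ℕ, ℝ) j| ≤ 1 - δ := by
      set s : Finset ℕ := ((finite_coord p hpt x (by norm_num : (0:ℝ) < 1/2)).toFinset.filter
        (fun j => j ∉ A)) with hs
      by_cases hsne : s.Nonempty
      · obtain ⟨j₀, hj₀s, hj₀max⟩ := s.exists_max_image (fun j => |(x : ∀ _ : ℕ, ℝ) j|) hsne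
        have hj₀A : j₀ ∉ A := (Finset.mem_filter.mp hj₀s).2
        have hj₀lt : |(x : ∀ _ : ℕ, ℝ) j₀| < 1 := lt_of_le_of_ne (hxc j₀) hj₀A
        refine ⟨min (1/2) (1 - |(x : ∀ _ : ℕ, ℝ) j₀|), lt_min (by norm_num) (by linarith), ?_⟩
        intro j hjA
        by_cases hjs : j ∈ s
        · have := hj₀max j hjs
          have h2 : min (1/2) (1 - |(x : ∀ _ : ℕ, ℝ) j₀|) ≤ 1 - |(x : ∀ _ : ℕ, ℝ) j₀| :=
            min_le_right _ _
          linarith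
        · have : ¬ ((1:ℝ)/2 ≤ |(x : ∀ _ : ℕ, ℝ) j|) := by
            intro hc
            exact hjs (Finset.mem_filter.mpr ⟨(Set.Finite.mem_toFinset _).mpr hc, hjA⟩)
          push_neg at this
          have h2 : min ((1:ℝ)/2) (1 - |(x : ∀ _ : ℕ, ℝ) j₀|) ≤ 1/2 := min_le_left _ _
          linarith
      · refine ⟨1/2, by norm_num, ?_⟩
        intro j hjA
        have : ¬ ((1:ℝ)/2 ≤ |(x : ∀ _ : ℕ, ℝ) j|) := by
          intro hc
          exact hsne ⟨j, Finset.mem_filter.mpr ⟨(Set.Finite.mem_toFinset _).mpr hc, hjA⟩⟩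
        push_neg at this
        linarith
    set ε : ℝ := δ / ‖h‖ with hε
    have hε0 : 0 < ε := div_pos hδ0 hhn
    have hmem : ∀ σ : ℝ, |σ| = 1 → x + (σ * ε) • h ∈ K := by
      intro σ hσ
      refine ⟨V.add_mem hxV (V.smul_mem _ hhV), ?_⟩
      intro j
      have hco : ((x + (σ * ε) • h : lp (fun _ : ℕ => ℝ) p) : ∀ _ : ℕ, ℝ) j
          = (x : ∀ _ : ℕ, ℝ) j + (σ * ε) * (h : ∀ _ : ℕ, ℝ) j := by
        rw [lp.coeFn_add, Pi.add_apply, lp.coeFn_smul, Pi.smul_apply, smul_eq_mul]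
      rw [hco]
      by_cases hjA : j ∈ A
      · rw [hhA j hjA]
        simpa using le_of_eq hjA
      · have h1 : |(x : ∀ _ : ℕ, ℝ) j| ≤ 1 - δ := hδ j hjA
        have h2 : |(h : ∀ _ : ℕ, ℝ) j| ≤ ‖h‖ := by
          simpa [Real.norm_eq_abs] using lp.norm_apply_le_norm ((zero_lt_one.trans_le (Fact.out : 1 ≤ p)).ne' : p ≠ 0) h j
        have h3 : |(σ * ε) * (h : ∀ _ : ℕ, ℝ) j| ≤ δ := by
          rw [abs_mul, abs_mul, hσ, one_mul, abs_of_pos hε0, hε]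
          rw [div_mul_eq_mul_div, div_le_iff₀ hhn]
          calc δ * |(h : ∀ _ : ℕ, ℝ) j| ≤ δ * ‖h‖ := by
                exact mul_le_mul_of_nonneg_left h2 hδ0.le
            _ = δ * ‖h‖ := rfl
        calc |(x : ∀ _ : ℕ, ℝ) j + (σ * ε) * (h : ∀ _ : ℕ, ℝ) j|
            ≤ |(x : ∀ _ : ℕ, ℝ) j| + |(σ * ε) * (h : ∀ _ : ℕ, ℝ) j| := abs_add_le _ _
          _ ≤ (1 - δ) + δ := add_le_add h1 h3
          _ = 1 := by ring
    have hm1 : x + ((-1 : ℝ) * ε) • h ∈ K := hmem (-1) (by norm_num)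
    have hp1 : x + ((1 : ℝ) * ε) • h ∈ K := hmem 1 (by norm_num)
    have hseg : x ∈ openSegment ℝ (x + ((-1 : ℝ) * ε) • h) (x + ((1 : ℝ) * ε) • h) := by
      refine ⟨1/2, 1/2, by norm_num, by norm_num, by norm_num, ?_⟩
      module
    have := (hext _ hm1 _ hp1 hseg).2
    have hεh : ε • h = 0 := by
      have h2 : x + ((1 : ℝ) * ε) • h = x := this
      rw [one_mul] at h2
      exact by
        have := congrArg (fun z => z - x) h2
        simpa [add_sub_cancel_left] using this
    rw [smul_eq_zero] at hεh
    rcases hεh with h' | h'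
    · exact hε0.ne' h'
    · exact hh0 h'
  -- the coordinates on A determine V, so n ≤ card A
  have hcard : (n : ℝ) ≤ (hAfin.toFinset.card : ℝ) := by
    have : Module.finrank ℝ V ≤ Module.finrank ℝ (hAfin.toFinset → ℝ) := by
      refine LinearMap.finrank_le_finrank_of_injective
        (f := { toFun := fun v : V => fun j : hAfin.toFinset => ((v : lp (fun _ : ℕ => ℝ) p) : ∀ _ : ℕ, ℝ) j.1,
                map_add' := by
                  intro a b; funext j
                  simp only [Submodule.coe_add, lp.coeFn_add, Pi.add_apply],
                map_smul' := by
                  intro c a; funext j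
                  simp only [Submodule.coe_smul, lp.coeFn_smul, Pi.smul_apply, RingHom.id_apply,
                    smul_eq_mul] }) ?_
      intro a b hab
      apply Subtype.ext
      have hz : ((a : lp (fun _ : ℕ => ℝ) p) - b) ∈ V := V.sub_mem a.2 b.2
      have : ((a : lp (fun _ : ℕ => ℝ) p) - b) = 0 := by
        refine hkey _ hz ?_
        intro j hjA
        have h4 := congrFun hab ⟨j, hAfin.mem_toFinset.mpr hjA⟩
        simp only [LinearMap.coe_mk, AddHom.coe_mk] at h4
        rw [lp.coeFn_sub, Pi.sub_apply, h4, sub_self]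
      exact sub_eq_zero.mp this
    rw [hV, Module.finrank_pi, Fintype.card_coe] at this
    exact_mod_cast this
  -- the norm of x is at least n^(1/p)
  have hnormp : (n : ℝ) ≤ ‖x‖ ^ p.toReal := by
    have hsum : Summable (fun j => ‖(x : ∀ _ : ℕ, ℝ) j‖ ^ p.toReal) := (lp.memℓp x).summable hpt
    have h1 : ∑ j ∈ hAfin.toFinset, ‖(x : ∀ _ : ℕ, ℝ) j‖ ^ p.toReal ≤ ∑' j, ‖(x : ∀ _ : ℕ, ℝ) j‖ ^ p.toReal :=
      Summable.sum_le_tsum _ (fun i _ => Real.rpow_nonneg (norm_nonneg _) _) hsum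
    have h2 : ∑ j ∈ hAfin.toFinset, ‖(x : ∀ _ : ℕ, ℝ) j‖ ^ p.toReal = hAfin.toFinset.card := by
      rw [Finset.sum_congr rfl (fun j hj => ?_), Finset.sum_const, nsmul_eq_mul, mul_one]
      rw [Real.norm_eq_abs, hAfin.mem_toFinset.mp hj, Real.one_rpow]
    rw [lp.norm_rpow_eq_tsum hpt]
    calc (n : ℝ) ≤ hAfin.toFinset.card := hcard
      _ = _ := h2.symm
      _ ≤ _ := h1
  have hxn : 0 < ‖x‖ := by
    by_contra hc
    push_neg at hc
    have : ‖x‖ = 0 := le_antisymm hc (norm_nonneg _)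
    rw [this, Real.zero_rpow hpt.ne'] at hnormp
    have : (1 : ℝ) ≤ (n : ℝ) := by exact_mod_cast hn
    linarith
  have hxlow : (n : ℝ) ^ (1 / p.toReal) ≤ ‖x‖ := by
    have := Real.rpow_le_rpow (by positivity) hnormp (by positivity : (0:ℝ) ≤ 1 / p.toReal)
    rwa [← Real.rpow_mul (norm_nonneg x), mul_one_div, div_self hpt.ne', Real.rpow_one] at this
  have hn0 : (0:ℝ) < (n:ℝ) ^ (1 / p.toReal) := Real.rpow_pos_of_pos (by exact_mod_cast hn : (0:ℝ) < n) _
  refine ⟨‖x‖⁻¹ • x, V.smul_mem _ hxV, ?_, ?_⟩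
  · rw [norm_smul, Real.norm_eq_abs, abs_of_pos (inv_pos.mpr hxn), inv_mul_cancel₀ hxn.ne']
  · intro j
    have hco : ((‖x‖⁻¹ • x : lp (fun _ : ℕ => ℝ) p) : ∀ _ : ℕ, ℝ) j = ‖x‖⁻¹ * (x : ∀ _ : ℕ, ℝ) j := by
      rw [lp.coeFn_smul, Pi.smul_apply, smul_eq_mul]
    rw [hco, abs_mul, abs_of_pos (inv_pos.mpr hxn), Real.rpow_neg (Nat.cast_nonneg n)]
    calc ‖x‖⁻¹ * |(x : ∀ _ : ℕ, ℝ) j| ≤ ‖x‖⁻¹ * 1 :=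
          mul_le_mul_of_nonneg_left (hxc j) (inv_pos.mpr hxn).le
      _ = ‖x‖⁻¹ := mul_one _
      _ ≤ ((n:ℝ) ^ (1 / p.toReal))⁻¹ := by
          exact inv_anti₀ hn0 hxlow

lemma single_coord (p : ENNReal) (i : ℕ) (a : ℝ) (j : ℕ) :
    (lp.single p i a : ∀ _ : ℕ, ℝ) j = if j = i then a else 0 := by
  rw [lp.single_apply]
  split_ifs with h
  · subst h; simp
  · simp [h]

lemma val_le_of_flat (p q : ENNReal) [Fact (1 ≤ p)] (hpt : 0 < p.toReal)
    (hqt : 0 < q.toReal) (hpq : p.toReal ≤ q.toReal) (x : lp (fun _ : ℕ => ℝ) p) (hx : ‖x‖ = 1)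
    {c : ℝ} (hc : 0 < c) (hflat : ∀ j, |(x : ∀ _ : ℕ, ℝ) j| ≤ c) :
    (∑' j, |(x : ∀ _ : ℕ, ℝ) j| ^ q.toReal) ^ (1 / q.toReal) ≤
      c ^ ((q.toReal - p.toReal) / q.toReal) := by
  have hsump : Summable (fun j => |(x : ∀ _ : ℕ, ℝ) j| ^ p.toReal) := by
    simpa [Real.norm_eq_abs] using (lp.memℓp x).summable hpt
  have hterm : ∀ j, |(x : ∀ _ : ℕ, ℝ) j| ^ q.toReal ≤
      c ^ (q.toReal - p.toReal) * |(x : ∀ _ : ℕ, ℝ) j| ^ p.toReal := by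
    intro j
    have h1 : |(x : ∀ _ : ℕ, ℝ) j| ^ q.toReal
        = |(x : ∀ _ : ℕ, ℝ) j| ^ (q.toReal - p.toReal) * |(x : ∀ _ : ℕ, ℝ) j| ^ p.toReal := by
      rw [← Real.rpow_add' (abs_nonneg _) (by rw [sub_add_cancel]; exact hqt.ne')]
      rw [sub_add_cancel]
    rw [h1]
    exact mul_le_mul_of_nonneg_right
      (Real.rpow_le_rpow (abs_nonneg _) (hflat j) (by linarith))
      (Real.rpow_nonneg (abs_nonneg _) _)
  have hsumq : Summable (fun j => |(x : ∀ _ : ℕ, ℝ) j| ^ q.toReal) := by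
    refine Summable.of_nonneg_of_le (fun j => Real.rpow_nonneg (abs_nonneg _) _) hterm ?_
    exact hsump.mul_left _
  have h2 : (∑' j, |(x : ∀ _ : ℕ, ℝ) j| ^ q.toReal) ≤ c ^ (q.toReal - p.toReal) := by
    calc (∑' j, |(x : ∀ _ : ℕ, ℝ) j| ^ q.toReal)
        ≤ ∑' j, c ^ (q.toReal - p.toReal) * |(x : ∀ _ : ℕ, ℝ) j| ^ p.toReal :=
          Summable.tsum_le_tsum hterm hsumq (hsump.mul_left _)
      _ = c ^ (q.toReal - p.toReal) * ∑' j, |(x : ∀ _ : ℕ, ℝ) j| ^ p.toReal := tsum_mul_left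
      _ = c ^ (q.toReal - p.toReal) := by
          have h3 : (∑' j, |(x : ∀ _ : ℕ, ℝ) j| ^ p.toReal) = ‖x‖ ^ p.toReal := by
            rw [lp.norm_rpow_eq_tsum hpt]
            simp [Real.norm_eq_abs]
          rw [h3, hx, Real.one_rpow, mul_one]
  calc (∑' j, |(x : ∀ _ : ℕ, ℝ) j| ^ q.toReal) ^ (1 / q.toReal)
      ≤ (c ^ (q.toReal - p.toReal)) ^ (1 / q.toReal) :=
        Real.rpow_le_rpow (tsum_nonneg (fun j => Real.rpow_nonneg (abs_nonneg _) _)) h2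
          (by positivity)
    _ = c ^ ((q.toReal - p.toReal) / q.toReal) := by
        rw [← Real.rpow_mul hc.le, mul_one_div]

lemma lower_witness (p q : ENNReal) [Fact (1 ≤ p)] (hpt : 0 < p.toReal) (hqt : 0 < q.toReal)
    (hpq : p.toReal ≤ q.toReal) (n : ℕ) (hn : 1 ≤ n) :
    ∃ V₀ : Submodule ℝ (lp (fun _ : ℕ => ℝ) p), Module.finrank ℝ V₀ = n ∧
      (∃ x₀ : lp (fun _ : ℕ => ℝ) p, x₀ ∈ V₀ ∧ ‖x₀‖ = 1) ∧
      ∀ x ∈ V₀, ‖x‖ = 1 →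
        (n : ℝ) ^ (1 / q.toReal - 1 / p.toReal) ≤
          (∑' j, |(x : ∀ _ : ℕ, ℝ) j| ^ q.toReal) ^ (1 / q.toReal) := by
  classical
  set b : Fin n → lp (fun _ : ℕ => ℝ) p := fun i => lp.single p (i : ℕ) (1 : ℝ) with hb
  -- coordinates of a linear combination
  have hcoord : ∀ (c : Fin n → ℝ) (j : ℕ),
      ((∑ i : Fin n, c i • b i : lp (fun _ : ℕ => ℝ) p) : ∀ _ : ℕ, ℝ) j
        = if h : j < n then c ⟨j, h⟩ else 0 := by
    intro c j
    rw [lp.coeFn_sum, Finset.sum_apply]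
    have h1 : ∀ i : Fin n, ((c i • b i : lp (fun _ : ℕ => ℝ) p) : ∀ _ : ℕ, ℝ) j
        = if j = (i : ℕ) then c i else 0 := by
      intro i
      rw [lp.coeFn_smul, Pi.smul_apply, hb, single_coord, smul_eq_mul, mul_ite, mul_one, mul_zero]
    rw [Finset.sum_congr rfl (fun i _ => h1 i)]
    by_cases h : j < n
    · rw [dif_pos h]
      rw [Finset.sum_eq_single (⟨j, h⟩ : Fin n)]
      · simp
      · intro i _ hne
        rw [if_neg]
        intro hji
        exact hne (by ext; simp [← hji])
      · intro habs
        exact absurd (Finset.mem_univ _) habs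
    · rw [dif_neg h]
      refine Finset.sum_eq_zero fun i _ => ?_
      rw [if_neg]
      intro hji
      exact h (hji ▸ i.isLt)
  have hli : LinearIndependent ℝ b := by
    rw [linearIndependent_iff']
    intro s g hsum i hi
    have h2 : ∑ i : Fin n, (if i ∈ s then g i else 0) • b i = 0 := by
      rw [Finset.sum_congr rfl (fun i (_ : i ∈ Finset.univ) => by rw [ite_smul, zero_smul])]
      rw [Finset.sum_ite_mem, Finset.univ_inter]
      simpa using hsum
    have h3 := hcoord (fun i => if i ∈ s then g i else 0) (i : ℕ)
    rw [h2, lp.coeFn_zero, Pi.zero_apply, dif_pos i.isLt] at h3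
    simp only [Fin.eta, hi, if_true] at h3
    exact h3.symm
  refine ⟨Submodule.span ℝ (Set.range b), ?_, ?_, ?_⟩
  · rw [finrank_span_eq_card hli, Fintype.card_fin]
  · refine ⟨b ⟨0, by omega⟩, Submodule.subset_span (Set.mem_range_self _), ?_⟩
    have := lp.norm_single (E := fun _ : ℕ => ℝ) (zero_lt_one.trans_le (Fact.out : 1 ≤ p)) 0 (1:ℝ)
    simpa [hb] using this
  · intro x hx hx1
    obtain ⟨c, hc⟩ := (Submodule.mem_span_range_iff_exists_fun ℝ).mp hx
    set f : ℕ → ℝ := fun j => if h : j < n then c ⟨j, h⟩ else 0 with hf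
    have hxco : ∀ j, (x : ∀ _ : ℕ, ℝ) j = f j := by
      intro j
      rw [← hc]
      exact hcoord c j
    have hzero : ∀ j ∉ Finset.range n, |(x : ∀ _ : ℕ, ℝ) j| ^ q.toReal = 0 := by
      intro j hj
      rw [hxco j]
      simp only [Finset.mem_range, not_lt] at hj
      simp only [hf, dif_neg (by omega : ¬ j < n)]
      simp [Real.zero_rpow hqt.ne']
    have hzerop : ∀ j ∉ Finset.range n, |(x : ∀ _ : ℕ, ℝ) j| ^ p.toReal = 0 := by
      intro j hj
      rw [hxco j]
      simp only [Finset.mem_range, not_lt] at hj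
      simp only [hf, dif_neg (by omega : ¬ j < n)]
      simp [Real.zero_rpow hpt.ne']
    have hnorm1 : ∑ j ∈ Finset.range n, |(x : ∀ _ : ℕ, ℝ) j| ^ p.toReal = 1 := by
      have h1 : ‖x‖ ^ p.toReal = ∑' j, |(x : ∀ _ : ℕ, ℝ) j| ^ p.toReal := by
        rw [lp.norm_rpow_eq_tsum hpt]
        simp [Real.norm_eq_abs]
      rw [tsum_eq_sum hzerop] at h1
      rw [← h1, hx1, Real.one_rpow]
    have hqsum : (∑' j, |(x : ∀ _ : ℕ, ℝ) j| ^ q.toReal)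
        = ∑ j ∈ Finset.range n, |(x : ∀ _ : ℕ, ℝ) j| ^ q.toReal := tsum_eq_sum hzero
    -- Jensen's inequality
    set e : ℝ := q.toReal / p.toReal with he
    have he1 : 1 ≤ e := (one_le_div hpt).mpr hpq
    have hN : (0:ℝ) < (n:ℝ) := by exact_mod_cast hn
    have hjen := Real.rpow_arith_mean_le_arith_mean_rpow (Finset.range n)
      (fun _ => (n:ℝ)⁻¹) (fun j => |(x : ∀ _ : ℕ, ℝ) j| ^ p.toReal)
      (fun i _ => by positivity) (by
        rw [Finset.sum_const, Finset.card_range, nsmul_eq_mul]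
        exact mul_inv_cancel₀ hN.ne')
      (fun i _ => Real.rpow_nonneg (abs_nonneg _) _) he1
    rw [← Finset.mul_sum, hnorm1, mul_one] at hjen
    have hpow : ∀ j, (|(x : ∀ _ : ℕ, ℝ) j| ^ p.toReal) ^ e = |(x : ∀ _ : ℕ, ℝ) j| ^ q.toReal := by
      intro j
      rw [← Real.rpow_mul (abs_nonneg _), he, mul_comm, div_mul_cancel₀ _ hpt.ne']
    rw [Finset.sum_congr rfl (fun j _ => by rw [hpow j]), ← Finset.mul_sum] at hjen
    -- so (n⁻¹)^e ≤ n⁻¹ * S_q, hence n^(1-e) ≤ S_q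
    have hSq : (n:ℝ) ^ (1 - e) ≤ ∑ j ∈ Finset.range n, |(x : ∀ _ : ℕ, ℝ) j| ^ q.toReal := by
      have h4 : (n:ℝ) * ((n:ℝ)⁻¹) ^ e ≤ ∑ j ∈ Finset.range n, |(x : ∀ _ : ℕ, ℝ) j| ^ q.toReal := by
        calc (n:ℝ) * ((n:ℝ)⁻¹) ^ e ≤ (n:ℝ) * ((n:ℝ)⁻¹ * ∑ j ∈ Finset.range n, |(x : ∀ _ : ℕ, ℝ) j| ^ q.toReal) :=
              mul_le_mul_of_nonneg_left hjen hN.le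
          _ = ∑ j ∈ Finset.range n, |(x : ∀ _ : ℕ, ℝ) j| ^ q.toReal := by
              rw [← mul_assoc, mul_inv_cancel₀ hN.ne', one_mul]
      calc (n:ℝ) ^ (1 - e) = (n:ℝ) ^ (1:ℝ) * (n:ℝ) ^ (-e) := by
            rw [← Real.rpow_add hN]; ring_nf
        _ = (n:ℝ) * ((n:ℝ)⁻¹) ^ e := by
            rw [Real.rpow_one, Real.inv_rpow hN.le, Real.rpow_neg hN.le]
        _ ≤ _ := h4
    rw [hqsum]
    have hexp : (1 - e) * (1 / q.toReal) = 1 / q.toReal - 1 / p.toReal := by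
      rw [he, sub_mul, one_mul, div_mul_div_comm, mul_one, mul_comm p.toReal q.toReal, ← div_div,
        div_self hqt.ne']
    calc (n:ℝ) ^ (1 / q.toReal - 1 / p.toReal) = ((n:ℝ) ^ (1 - e)) ^ (1 / q.toReal) := by
          rw [← Real.rpow_mul hN.le, hexp]
      _ ≤ (∑ j ∈ Finset.range n, |(x : ∀ _ : ℕ, ℝ) j| ^ q.toReal) ^ (1 / q.toReal) :=
          Real.rpow_le_rpow (Real.rpow_nonneg hN.le _) hSq (by positivity)

/-- The `n`-th Bernstein number of the natural inclusion `ℓ_p → ℓ_q` for `1 ≤ p < q < ∞`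
equals `n^(1/q - 1/p)`.  The Bernstein number is written out explicitly as the supremum
over `n`-dimensional subspaces `V` of `ℓ_p` of the infimum over unit vectors `x ∈ V` of
the `ℓ_q` norm of `x`. -/
theorem stmt7 (p q : ENNReal) (hp : 1 ≤ p) (hpq : p < q) (hq : q ≠ ⊤)
    (n : ℕ) (hn : 1 ≤ n) :
    (⨆ V : {V : Submodule ℝ (lp (fun _ : ℕ => ℝ) p) // Module.finrank ℝ V = n},
      ⨅ x : {x : lp (fun _ : ℕ => ℝ) p // x ∈ V.1 ∧ ‖x‖ = 1},
        (∑' j, |(x.1 : ∀ _ : ℕ, ℝ) j| ^ q.toReal) ^ (1 / q.toReal)) =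
      (n : ℝ) ^ (1 / q.toReal - 1 / p.toReal) := by
  haveI : Fact (1 ≤ p) := ⟨hp⟩
  have hptop : p ≠ ⊤ := ne_top_of_lt hpq
  have hp0 : p ≠ 0 := (zero_lt_one.trans_le hp).ne'
  have hpt : 0 < p.toReal := ENNReal.toReal_pos hp0 hptop
  have hq0 : q ≠ 0 := (zero_lt_one.trans_le (hp.trans hpq.le)).ne'
  have hqt : 0 < q.toReal := ENNReal.toReal_pos hq0 hq
  have hptq : p.toReal ≤ q.toReal := ENNReal.toReal_mono hq hpq.le
  have hN : (0:ℝ) < (n:ℝ) := by exact_mod_cast hn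
  -- upper bound for each V
  have hupper : ∀ V : {V : Submodule ℝ (lp (fun _ : ℕ => ℝ) p) // Module.finrank ℝ V = n},
      (⨅ x : {x : lp (fun _ : ℕ => ℝ) p // x ∈ V.1 ∧ ‖x‖ = 1},
        (∑' j, |(x.1 : ∀ _ : ℕ, ℝ) j| ^ q.toReal) ^ (1 / q.toReal)) ≤
      (n : ℝ) ^ (1 / q.toReal - 1 / p.toReal) := by
    intro V
    obtain ⟨x, hxV, hx1, hxflat⟩ := exists_unit_flat p hpt hn V.1 V.2
    have hc : (0:ℝ) < (n : ℝ) ^ (-(1 / p.toReal)) := Real.rpow_pos_of_pos hN _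
    have hval := val_le_of_flat p q hpt hqt hptq x hx1 hc hxflat
    have hexp : ((n : ℝ) ^ (-(1 / p.toReal))) ^ ((q.toReal - p.toReal) / q.toReal)
        = (n : ℝ) ^ (1 / q.toReal - 1 / p.toReal) := by
      rw [← Real.rpow_mul hN.le]
      congr 1
      rw [div_sub_div _ _ hqt.ne' hpt.ne', neg_mul, div_mul_div_comm, one_mul, ← neg_div,
        neg_sub, one_mul, mul_comm p.toReal q.toReal, mul_one]
    rw [hexp] at hval
    have hbdd : BddBelow (Set.range fun x : {x : lp (fun _ : ℕ => ℝ) p // x ∈ V.1 ∧ ‖x‖ = 1} =>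
        (∑' j, |(x.1 : ∀ _ : ℕ, ℝ) j| ^ q.toReal) ^ (1 / q.toReal)) := by
      refine ⟨0, ?_⟩
      rintro y ⟨z, rfl⟩
      exact Real.rpow_nonneg (tsum_nonneg fun j => Real.rpow_nonneg (abs_nonneg _) _) _
    exact ciInf_le_of_le hbdd ⟨x, hxV, hx1⟩ hval
  obtain ⟨V₀, hV₀, ⟨x₀, hx₀V, hx₀1⟩, hlow⟩ := lower_witness p q hpt hqt hptq n hn
  haveI : Nonempty {V : Submodule ℝ (lp (fun _ : ℕ => ℝ) p) // Module.finrank ℝ V = n} :=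
    ⟨⟨V₀, hV₀⟩⟩
  refine le_antisymm (ciSup_le hupper) ?_
  have hbdd : BddAbove (Set.range fun V : {V : Submodule ℝ (lp (fun _ : ℕ => ℝ) p) //
      Module.finrank ℝ V = n} =>
      ⨅ x : {x : lp (fun _ : ℕ => ℝ) p // x ∈ V.1 ∧ ‖x‖ = 1},
        (∑' j, |(x.1 : ∀ _ : ℕ, ℝ) j| ^ q.toReal) ^ (1 / q.toReal)) := by
    refine ⟨(n : ℝ) ^ (1 / q.toReal - 1 / p.toReal), ?_⟩
    rintro y ⟨V, rfl⟩
    exact hupper V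
  refine le_ciSup_of_le hbdd ⟨V₀, hV₀⟩ ?_
  haveI : Nonempty {x : lp (fun _ : ℕ => ℝ) p // x ∈ V₀ ∧ ‖x‖ = 1} := ⟨⟨x₀, hx₀V, hx₀1⟩⟩
  exact le_ciInf fun x => hlow x.1 x.2.1 x.2.2
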